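/- Let N, M ≥ 1. Let Γ ∈ ℝ^{N×M} with rows γ_1ᵀ,…,γ_Nᵀ, let R ∈ ℝ^{M×N} with columns r_1,…,r_N, and for each i ∈ {1,…,N} let 𝒩_i ⊆ {1,…,N}. Assume there exist M distinct indices i_1,…,i_M ∈ {1,…,N} such that (γ_{i_ℓ})_{ℓ=1}^M is a basis of ℝ^M and, for each ℓ, the set {r_j : j ∉ 𝒩_{i_ℓ}} spans ℝ^M. For each i let g_i, g'_i : ℝ^N → ℝ depend only on coordinates in 𝒩_i, and let Θ, Θ' ∈ ℝ^{M×M} (in particular, orthogonal matrices). If g_i(d) + γ_iᵀ Θ R d = g'_i(d) + γ_iᵀ Θ' R d for every i ∈ {1,…,N} and every d ∈ ℝ^N, then Θ = Θ' and g_i = g'_i for every i. -/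
import Mathlib


open Matrix

/-- A function `h : ℝ^N → ℝ` depends only on the coordinates in `𝒩` if its value is
unchanged whenever the coordinates in `𝒩` are unchanged. -/
def DependsOnlyOn {N : ℕ} (h : (Fin N → ℝ) → ℝ) (𝒩 : Set (Fin N)) : Prop :=
  ∀ d d' : Fin N → ℝ, (∀ j ∈ 𝒩, d j = d' j) → h d = h d'

/-- **Deterministic core of Theorem 1 (identification under factor confounding).**
Under the off-neighborhood rank condition (Assumption 7), the conditional-mean
decomposition `d ↦ g_i(d) + γ_iᵀ Θ R d` uniquely determines both the matrix `Θ` and the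
causal effect functions `g_i`. -/
theorem factor_confounding_identification
    {N M : ℕ} (hN : 1 ≤ N) (hM : 1 ≤ M)
    (Γ : Matrix (Fin N) (Fin M) ℝ) (R : Matrix (Fin M) (Fin N) ℝ)
    (𝒩 : Fin N → Set (Fin N))
    (idx : Fin M → Fin N) (hidx : Function.Injective idx)
    (hbasis_indep : LinearIndependent ℝ (fun ℓ => fun k => Γ (idx ℓ) k))
    (hbasis_span : Submodule.span ℝ (Set.range (fun ℓ => fun k => Γ (idx ℓ) k)) = ⊤)
    (hrank : ∀ ℓ : Fin M,
      Submodule.span ℝ {v : Fin M → ℝ | ∃ j ∉ 𝒩 (idx ℓ), v = fun m => R m j} = ⊤)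
    (g g' : Fin N → (Fin N → ℝ) → ℝ)
    (hg : ∀ i, DependsOnlyOn (g i) (𝒩 i)) (hg' : ∀ i, DependsOnlyOn (g' i) (𝒩 i))
    (Θ Θ' : Matrix (Fin M) (Fin M) ℝ)
    (heq : ∀ (i : Fin N) (d : Fin N → ℝ),
      g i d + (fun k => Γ i k) ⬝ᵥ Θ.mulVec (R.mulVec d) =
        g' i d + (fun k => Γ i k) ⬝ᵥ Θ'.mulVec (R.mulVec d)) :
    Θ = Θ' ∧ ∀ i, g i = g' i := by
  set A : Matrix (Fin M) (Fin M) ℝ := Θ - Θ' with hA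
  -- g i 0 = g' i 0 for all i
  have h0 : ∀ i, g i 0 = g' i 0 := by
    intro i
    have := heq i 0
    simpa [Matrix.mulVec_zero, dotProduct_zero] using this
  -- Step 1: for each ℓ and each j outside the neighborhood, γ_ℓ ⬝ A r_j = 0
  have hgen : ∀ ℓ : Fin M, ∀ j ∉ 𝒩 (idx ℓ),
      (fun k => Γ (idx ℓ) k) ⬝ᵥ A.mulVec (fun m => R m j) = 0 := by
    intro ℓ j hj
    have hd : g (idx ℓ) (Pi.single j 1) = g (idx ℓ) 0 := by
      apply hg (idx ℓ)
      intro j' hj'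
      have : j' ≠ j := fun h => hj (h ▸ hj')
      simp [Pi.single_eq_of_ne this]
    have hd' : g' (idx ℓ) (Pi.single j 1) = g' (idx ℓ) 0 := by
      apply hg' (idx ℓ)
      intro j' hj'
      have : j' ≠ j := fun h => hj (h ▸ hj')
      simp [Pi.single_eq_of_ne this]
    have hRe : R.mulVec (Pi.single j 1) = fun m => R m j := by
      funext m
      simp [Matrix.mulVec_single]
    have hheq := heq (idx ℓ) (Pi.single j 1)
    rw [hRe, hd, hd', h0 (idx ℓ)] at hheq
    have hlin : (fun k => Γ (idx ℓ) k) ⬝ᵥ Θ.mulVec (fun m => R m j) =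
        (fun k => Γ (idx ℓ) k) ⬝ᵥ Θ'.mulVec (fun m => R m j) := by
      linarith
    simp only [hA, Matrix.sub_mulVec, dotProduct_sub]
    rw [hlin]
    ring
  -- Step 2: γ_ℓ ⬝ A v = 0 for all v
  have key : ∀ ℓ : Fin M, ∀ v : Fin M → ℝ,
      (fun k => Γ (idx ℓ) k) ⬝ᵥ A.mulVec v = 0 := by
    intro ℓ
    let f : (Fin M → ℝ) →ₗ[ℝ] ℝ :=
      { toFun := fun v => (fun k => Γ (idx ℓ) k) ⬝ᵥ A.mulVec v
        map_add' := by
          intro x y; simp [Matrix.mulVec_add, dotProduct_add]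
        map_smul' := by
          intro c x; simp [Matrix.mulVec_smul, dotProduct_smul] }
    have hsub : {v : Fin M → ℝ | ∃ j ∉ 𝒩 (idx ℓ), v = fun m => R m j} ⊆
        (LinearMap.ker f : Set (Fin M → ℝ)) := by
      rintro v ⟨j, hj, rfl⟩
      exact hgen ℓ j hj
    have hspan : Submodule.span ℝ
        {v : Fin M → ℝ | ∃ j ∉ 𝒩 (idx ℓ), v = fun m => R m j} ≤ LinearMap.ker f :=
      Submodule.span_le.mpr hsub
    rw [hrank ℓ] at hspan
    intro v
    exact hspan (Submodule.mem_top (x := v))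
  -- Step 3: w ⬝ A v = 0 for all w, v (since the γ's span)
  have key2 : ∀ (w v : Fin M → ℝ), w ⬝ᵥ A.mulVec v = 0 := by
    intro w v
    let f : (Fin M → ℝ) →ₗ[ℝ] ℝ :=
      { toFun := fun w => w ⬝ᵥ A.mulVec v
        map_add' := by intro x y; simp [add_dotProduct]
        map_smul' := by intro c x; simp [smul_dotProduct] }
    have hsub : Set.range (fun ℓ => fun k => Γ (idx ℓ) k) ⊆
        (LinearMap.ker f : Set (Fin M → ℝ)) := by
      rintro w ⟨ℓ, rfl⟩
      exact key ℓ v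
    have hspan := Submodule.span_le.mpr hsub
    rw [hbasis_span] at hspan
    exact hspan (Submodule.mem_top (x := w))
  -- Θ = Θ'
  have hAzero : A = 0 := by
    ext k m
    have := key2 (Pi.single k 1) (Pi.single m 1)
    simpa [dotProduct, Matrix.mulVec_single, Pi.single_apply,
      Finset.mul_sum, mul_comm] using this
  have hΘ : Θ = Θ' := sub_eq_zero.mp hAzero
  refine ⟨hΘ, fun i => ?_⟩
  funext d
  have := heq i d
  rw [hΘ] at this
  exact add_right_cancel this
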